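/- arXiv:1404.2659 — 3 statements merged into one kernel-verified Lean document; each statement's English description precedes it below -/
import Mathlib

section
/- Let f : (Fin n → ℤ) → Λ converge on S, let p ∈ S, and let b : Fin n → Λˣ be units of Λ with (↑(b i)).order = 0 for every i. Define e A := f A * (HahnSeries.single ⟨p,A⟩ 1) * ∏ i, ((b i)^(A i) : Λ), using integer powers in the unit group. Then for every E ∈ ℝ the set {A | e A ≠ 0 ∧ (e A).order ≤ E} is finite; hence the family e underlies a HahnSeries.SummableFamily and the evaluation ∑_A f A · t^{⟨p,A⟩} · b^A is a well-defined element of Λ. (This is the assertion that elements of the affinoid ring O_P converge T-adically at every point (p,b) of Y_P.) -/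
/-- The pairing `⟨v, A⟩ = ∑ i, v i * A i` between a real vector and an integral vector. -/
noncomputable def pairing (n : ℕ) (v : Fin n → ℝ) (A : Fin n → ℤ) : ℝ :=
  ∑ i, v i * (A i : ℝ)

/-- A family `f : (Fin n → ℤ) → Λ` converges on a set `S ⊆ ℝⁿ` if for every `v ∈ S` and
every `E ∈ ℝ` only finitely many nonzero terms satisfy `val(f A) + ⟨v, A⟩ ≤ E`. -/
def ConvergesOn (k : Type*) [Field k] (n : ℕ) (f : (Fin n → ℤ) → HahnSeries ℝ k)
    (S : Set (Fin n → ℝ)) : Prop :=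
  ∀ v ∈ S, ∀ E : ℝ, {A : Fin n → ℤ | f A ≠ 0 ∧ (f A).order + pairing n v A ≤ E}.Finite

section aux

variable {k : Type*} [Field k]

lemma order_units_mul (u w : (HahnSeries ℝ k)ˣ) :
    ((u * w : (HahnSeries ℝ k)ˣ) : HahnSeries ℝ k).order
      = ((u : HahnSeries ℝ k)).order + ((w : HahnSeries ℝ k)).order := by
  rw [Units.val_mul, HahnSeries.order_mul u.ne_zero w.ne_zero]

lemma order_units_zero_mul {u w : (HahnSeries ℝ k)ˣ}
    (hu : ((u : HahnSeries ℝ k)).order = 0) (hw : ((w : HahnSeries ℝ k)).order = 0) :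
    ((u * w : (HahnSeries ℝ k)ˣ) : HahnSeries ℝ k).order = 0 := by
  rw [order_units_mul, hu, hw, add_zero]

lemma order_units_inv {u : (HahnSeries ℝ k)ˣ}
    (hu : ((u : HahnSeries ℝ k)).order = 0) :
    ((u⁻¹ : (HahnSeries ℝ k)ˣ) : HahnSeries ℝ k).order = 0 := by
  have h := order_units_mul u u⁻¹
  rw [mul_inv_cancel, hu, zero_add] at h
  simp only [Units.val_one, HahnSeries.order_one] at h
  exact h.symm

lemma order_units_zpow {u : (HahnSeries ℝ k)ˣ}
    (hu : ((u : HahnSeries ℝ k)).order = 0) (m : ℤ) :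
    ((u ^ m : (HahnSeries ℝ k)ˣ) : HahnSeries ℝ k).order = 0 := by
  have hnat : ∀ j : ℕ, ((u ^ j : (HahnSeries ℝ k)ˣ) : HahnSeries ℝ k).order = 0 := by
    intro j
    induction j with
    | zero => simp [HahnSeries.order_one]
    | succ j ih =>
      rw [pow_succ]
      exact order_units_zero_mul ih hu
  cases m with
  | ofNat j => simpa using hnat j
  | negSucc j =>
    rw [zpow_negSucc]
    exact order_units_inv (hnat (j + 1))

lemma order_units_prod {ι : Type*} (s : Finset ι) (u : ι → (HahnSeries ℝ k)ˣ)
    (h : ∀ i ∈ s, ((u i : HahnSeries ℝ k)).order = 0) :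
    ((∏ i ∈ s, u i : (HahnSeries ℝ k)ˣ) : HahnSeries ℝ k).order = 0 := by
  classical
  induction s using Finset.induction_on with
  | empty => rw [Finset.prod_empty, Units.val_one]; exact HahnSeries.order_one
  | @insert a t hx ih =>
    rw [Finset.prod_insert hx]
    exact order_units_zero_mul (h a (Finset.mem_insert_self a t))
      (ih fun i hi => h i (Finset.mem_insert_of_mem hi))

end aux

/-- Elements of the affinoid ring `O_P` converge T-adically at every point `(p, b)` of
`Y_P`: if `f` converges on `S`, `p ∈ S` and `b` is a tuple of units of order `0`, then the
family `e A = f A · t^{⟨p,A⟩} · b^A` has orders tending to `+∞`, hence underlies a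
`HahnSeries.SummableFamily` and its sum is a well-defined element of `Λ`. -/
theorem evaluation_at_point_converges (k : Type*) [Field k] (n : ℕ)
    (S : Set (Fin n → ℝ)) (f : (Fin n → ℤ) → HahnSeries ℝ k)
    (hf : ConvergesOn k n f S) (p : Fin n → ℝ) (hp : p ∈ S)
    (b : Fin n → (HahnSeries ℝ k)ˣ)
    (hb : ∀ i, ((b i : (HahnSeries ℝ k)ˣ) : HahnSeries ℝ k).order = 0)
    (e : (Fin n → ℤ) → HahnSeries ℝ k)
    (he : ∀ A, e A = f A * HahnSeries.single (pairing n p A) 1 *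
      ∏ i, ((b i ^ (A i) : (HahnSeries ℝ k)ˣ) : HahnSeries ℝ k)) :
    (∀ E : ℝ, {A : Fin n → ℤ | e A ≠ 0 ∧ (e A).order ≤ E}.Finite) ∧
    ∃ s : HahnSeries.SummableFamily ℝ k (Fin n → ℤ), ∀ A, s A = e A := by
  -- the product of units
  have hprod : ∀ A : Fin n → ℤ,
      (∏ i, ((b i ^ (A i) : (HahnSeries ℝ k)ˣ) : HahnSeries ℝ k))
        = ((∏ i, b i ^ (A i) : (HahnSeries ℝ k)ˣ) : HahnSeries ℝ k) := by
    intro A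
    exact (Units.coe_prod _ _).symm
  have hUord : ∀ A : Fin n → ℤ,
      ((∏ i, b i ^ (A i) : (HahnSeries ℝ k)ˣ) : HahnSeries ℝ k).order = 0 := by
    intro A
    exact order_units_prod _ _ (fun i _ => order_units_zpow (hb i) (A i))
  have hsingle : ∀ A : Fin n → ℤ,
      (HahnSeries.single (pairing n p A) (1 : k)) ≠ 0 :=
    fun A => HahnSeries.single_ne_zero one_ne_zero
  have hne : ∀ A : Fin n → ℤ, f A ≠ 0 → e A ≠ 0 := by
    intro A hA
    rw [he A, hprod A]
    exact mul_ne_zero (mul_ne_zero hA (hsingle A)) (Units.ne_zero _)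
  have hzero : ∀ A : Fin n → ℤ, e A ≠ 0 → f A ≠ 0 := by
    intro A hA hA0
    apply hA
    rw [he A, hA0, zero_mul, zero_mul]
  have hord : ∀ A : Fin n → ℤ, f A ≠ 0 →
      (e A).order = (f A).order + pairing n p A := by
    intro A hA
    rw [he A, hprod A,
      HahnSeries.order_mul (mul_ne_zero hA (hsingle A)) (Units.ne_zero _),
      HahnSeries.order_mul hA (hsingle A), HahnSeries.order_single one_ne_zero,
      hUord A, add_zero]
  have hfin : ∀ E : ℝ, {A : Fin n → ℤ | e A ≠ 0 ∧ (e A).order ≤ E}.Finite := by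
    intro E
    refine (hf p hp E).subset ?_
    rintro A ⟨hA, hAE⟩
    have hfA := hzero A hA
    exact ⟨hfA, by rwa [← hord A hfA]⟩
  refine ⟨hfin, ?_⟩
  -- construct the summable family
  have hco : ∀ g : ℝ, {A : Fin n → ℤ | (e A).coeff g ≠ 0}.Finite := by
    intro g
    refine (hfin g).subset ?_
    intro A hA
    have h1 : e A ≠ 0 := fun h0 => hA (by rw [h0]; simp)
    exact ⟨h1, HahnSeries.order_le_of_coeff_ne_zero hA⟩
  have hpwo : Set.IsPWO (⋃ A : Fin n → ℤ, (e A).support) := by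
    rw [Set.isPWO_iff_isWF]
    rw [Set.isWF_iff_no_descending_seq]
    intro g hg hmem
    have hEB : ∀ m : ℕ, ∃ A : Fin n → ℤ, e A ≠ 0 ∧ (e A).order ≤ g 0 ∧
        g m ∈ (e A).support := by
      intro m
      obtain ⟨A, hA⟩ := Set.mem_iUnion.mp (hmem m)
      have hne' : e A ≠ 0 := fun h0 => by simp [h0, HahnSeries.support_zero] at hA
      refine ⟨A, hne', ?_, hA⟩
      calc (e A).order ≤ g m := HahnSeries.order_le_of_coeff_ne_zero hA
        _ ≤ g 0 := by
            rcases Nat.eq_zero_or_pos m with h | h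
            · simp [h]
            · exact le_of_lt (hg h)
    choose Af hAf1 hAf2 hAf3 using hEB
    -- all g m lie in a finite union of PWO supports
    have hsub : Set.range g ⊆ ⋃ A ∈ (hfin (g 0)).toFinset, (e A).support := by
      rintro x ⟨m, rfl⟩
      exact Set.mem_biUnion ((hfin (g 0)).mem_toFinset.mpr ⟨hAf1 m, hAf2 m⟩) (hAf3 m)
    have hbU : Set.IsPWO (⋃ A ∈ (hfin (g 0)).toFinset, (e A).support) :=
      (Finset.isPWO_bUnion _).mpr fun A _ => (e A).isPWO_support
    have hwf := Set.isPWO_iff_isWF.mp (hbU.mono hsub)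
    rw [Set.isWF_iff_no_descending_seq] at hwf
    exact hwf g hg (fun m => ⟨m, rfl⟩)
  exact ⟨⟨e, hpwo, hco⟩, fun A => rfl⟩
end

section
/- Let f, g : (Fin n → ℤ) → Λ converge on S and let v₀ ∈ S. Then: (i) for every A : Fin n → ℤ and every E ∈ ℝ the set {B | f B * g (A − B) ≠ 0 ∧ (f B * g (A − B)).order ≤ E} is finite, so that the convolution coefficient h A := ∑_B f B * g (A − B) is a well-defined element of Λ (as the sum of a HahnSeries.SummableFamily); (ii) the resulting family h converges on S; and (iii) the pointwise sum f + g converges on S. (This is the assertion that the convergent series on an integral affine polytope form the affinoid ring O_P.) -/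
lemma pairing_add (n : ℕ) (v : Fin n → ℝ) (B C : Fin n → ℤ) :
    pairing n v (B + C) = pairing n v B + pairing n v C := by
  simp only [pairing, ← Finset.sum_add_distrib]
  refine Finset.sum_congr rfl fun i _ => ?_
  simp only [Pi.add_apply, Int.cast_add]
  ring

/-- Lower bound for the weighted orders of a convergent family. -/
lemma exists_lower_bound {k : Type*} [Field k] {n : ℕ} {f : (Fin n → ℤ) → HahnSeries ℝ k}
    {v : Fin n → ℝ}
    (h : ∀ E : ℝ, {A : Fin n → ℤ | f A ≠ 0 ∧ (f A).order + pairing n v A ≤ E}.Finite) :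
    ∃ m : ℝ, ∀ A, f A ≠ 0 → m ≤ (f A).order + pairing n v A := by
  set T := ((h 0).toFinset.image fun A => (f A).order + pairing n v A) with hT
  by_cases hne : T.Nonempty
  · refine ⟨min 0 (T.min' hne), fun A hA => ?_⟩
    by_cases hle : (f A).order + pairing n v A ≤ 0
    · refine le_trans (min_le_right _ _) (T.min'_le _ ?_)
      exact Finset.mem_image.2 ⟨A, (h 0).mem_toFinset.2 ⟨hA, hle⟩, rfl⟩
    · exact le_trans (min_le_left _ _) (le_of_not_ge hle)
  · refine ⟨0, fun A hA => ?_⟩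
    by_contra hc
    exact hne ⟨_, Finset.mem_image.2
      ⟨A, (h 0).mem_toFinset.2 ⟨hA, le_of_lt (lt_of_not_ge hc)⟩, rfl⟩⟩

/-- Key finiteness: convolution terms with bounded order form a finite set. -/
lemma conv_finite {k : Type*} [Field k] {n : ℕ} {f g : (Fin n → ℤ) → HahnSeries ℝ k}
    {v : Fin n → ℝ}
    (hfv : ∀ E : ℝ, {A : Fin n → ℤ | f A ≠ 0 ∧ (f A).order + pairing n v A ≤ E}.Finite)
    (hgv : ∀ E : ℝ, {A : Fin n → ℤ | g A ≠ 0 ∧ (g A).order + pairing n v A ≤ E}.Finite)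
    (A : Fin n → ℤ) (E : ℝ) :
    {B : Fin n → ℤ | f B * g (A - B) ≠ 0 ∧ (f B * g (A - B)).order ≤ E}.Finite := by
  obtain ⟨m, hm⟩ := exists_lower_bound hgv
  refine (hfv (E + pairing n v A - m)).subset fun B hB => ?_
  obtain ⟨hBne, hBle⟩ := hB
  have hfB : f B ≠ 0 := left_ne_zero_of_mul hBne
  have hgB : g (A - B) ≠ 0 := right_ne_zero_of_mul hBne
  have horder : (f B).order + (g (A - B)).order ≤ E := by
    rwa [HahnSeries.order_mul hfB hgB] at hBle
  have hp : pairing n v A = pairing n v B + pairing n v (A - B) := by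
    rw [← pairing_add]; congr 1; abel
  have := hm (A - B) hgB
  exact ⟨hfB, by linarith⟩

/-- Convergent series on a set `S` (containing a point `v₀`) form a ring. -/
theorem convergent_series_form_ring (k : Type*) [Field k] (n : ℕ)
    (S : Set (Fin n → ℝ)) (f g : (Fin n → ℤ) → HahnSeries ℝ k)
    (hf : ConvergesOn k n f S) (hg : ConvergesOn k n g S)
    (v₀ : Fin n → ℝ) (hv₀ : v₀ ∈ S) :
    (∀ (A : Fin n → ℤ) (E : ℝ),
      {B : Fin n → ℤ | f B * g (A - B) ≠ 0 ∧ (f B * g (A - B)).order ≤ E}.Finite) ∧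
    (∃ s : (Fin n → ℤ) → HahnSeries.SummableFamily ℝ k (Fin n → ℤ),
      (∀ A B, s A B = f B * g (A - B)) ∧
      ConvergesOn k n (fun A => (s A).hsum) S) ∧
    ConvergesOn k n (fun A => f A + g A) S := by
  have hi : ∀ (A : Fin n → ℤ) (E : ℝ),
      {B : Fin n → ℤ | f B * g (A - B) ≠ 0 ∧ (f B * g (A - B)).order ≤ E}.Finite :=
    conv_finite (hf v₀ hv₀) (hg v₀ hv₀)
  refine ⟨hi, ⟨fun A => ⟨fun B => f B * g (A - B), ?_, ?_⟩, fun A B => rfl, ?_⟩, ?_⟩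
  · -- isPWO of union of supports
    rw [Set.isPWO_iff_isWF, Set.isWF_iff_no_descending_seq]
    intro u hu hmem
    set F := (hi A (u 0)).toFinset with hF
    have hsub : ∀ j : ℕ, u j ∈ ⋃ B ∈ F, (f B * g (A - B)).support := by
      intro j
      obtain ⟨B, hj⟩ := Set.mem_iUnion.1 (hmem j)
      have hj : u j ∈ (f B * g (A - B)).support := hj
      refine Set.mem_biUnion ((hi A (u 0)).mem_toFinset.2 ⟨?_, ?_⟩) hj
      · intro h0; rw [h0] at hj; simp [HahnSeries.support] at hj
      · refine le_trans (HahnSeries.order_le_of_coeff_ne_zero hj) ?_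
        rcases Nat.eq_zero_or_pos j with rfl | hj'
        · exact le_refl _
        · exact (hu hj').le
    have hwf : Set.IsWF (⋃ B ∈ F, (f B * g (A - B)).support) := by
      rw [Set.IsWF, Finset.wellFoundedOn_bUnion]
      exact fun B _ => (f B * g (A - B)).isWF_support
    exact (Set.isWF_iff_no_descending_seq.1 hwf) u hu hsub
  · -- finite co-support
    intro x
    refine (hi A x).subset fun B hB => ?_
    have hB' : f B * g (A - B) ≠ 0 := fun h0 => hB (by simp [h0])
    exact ⟨hB', HahnSeries.order_le_of_coeff_ne_zero hB⟩
  · -- the convolution converges on S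
    intro v hv E
    obtain ⟨mf, hmf⟩ := exists_lower_bound (hf v hv)
    obtain ⟨mg, hmg⟩ := exists_lower_bound (hg v hv)
    refine (((hf v hv (E - mg)).prod (hg v hv (E - mf))).image fun p => p.1 + p.2).subset
      fun A hA => ?_
    obtain ⟨hAne, hAle⟩ := hA
    -- the order of the hsum lies in its support, contained in the union of supports
    have horder := HahnSeries.coeff_order_eq_zero.not.2 hAne
    obtain ⟨B, hB⟩ := Set.mem_iUnion.1
      (HahnSeries.SummableFamily.support_hsum_subset horder)
    have hB : _ ∈ (f B * g (A - B)).support := hB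
    have hBne : f B * g (A - B) ≠ 0 := fun h0 => by rw [h0] at hB; simp [HahnSeries.support] at hB
    have hfB : f B ≠ 0 := left_ne_zero_of_mul hBne
    have hgB : g (A - B) ≠ 0 := right_ne_zero_of_mul hBne
    have h1 : (f B * g (A - B)).order ≤ _ := HahnSeries.order_le_of_coeff_ne_zero hB
    rw [HahnSeries.order_mul hfB hgB] at h1
    have hp : pairing n v A = pairing n v B + pairing n v (A - B) := by
      rw [← pairing_add]; congr 1; abel
    have hwB := hmf B hfB
    have hwC := hmg (A - B) hgB
    exact ⟨(B, A - B), ⟨⟨hfB, by linarith⟩, ⟨hgB, by linarith⟩⟩, by simp⟩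
  · -- the sum converges on S
    intro v hv E
    refine ((hf v hv E).union (hg v hv E)).subset fun A hA => ?_
    obtain ⟨hAne, hAle⟩ := hA
    simp only at hAne hAle
    by_cases hfA : f A = 0
    · right; rw [hfA, zero_add] at hAne hAle; exact ⟨hAne, hAle⟩
    by_cases hgA : g A = 0
    · left; rw [hgA, add_zero] at hAne hAle; exact ⟨hfA, hAle⟩
    have hmin := HahnSeries.min_order_le_order_add hAne
    rcases le_total (f A).order (g A).order with h | h
    · rw [min_eq_left h] at hmin
      exact Or.inl ⟨hfA, by linarith⟩
    · rw [min_eq_right h] at hmin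
      exact Or.inr ⟨hgA, by linarith⟩
end

section
/- Let f, g : (Fin n → ℤ) → Λ converge on S, let p ∈ S, and let b : Fin n → Λˣ be units with (↑(b i)).order = 0 for all i. Let h A := ∑_B f B * g (A − B) denote the convolution product (well defined as a sum of a HahnSeries.SummableFamily), and for a family u write ev(u) := ∑_A u A * (HahnSeries.single ⟨p,A⟩ 1) * ∏ i ((b i)^(A i) : Λ), the evaluation at (p,b) (again a well-defined sum of a summable family). Then ev(h) = ev(f) * ev(g). (This is the statement that evaluation at a point (p,b) of Y_P is a ring homomorphism from the affinoid ring O_P to Λ, underlying the specialization isomorphism of Equation (iso_modules).) -/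
/-- Evaluation at a point `(p, b)` of `Y_P` is multiplicative: if `h` is the convolution
product of `f` and `g` (each coefficient being the sum of a summable family), and `ev(u)`
denotes the sum `∑_A u A · t^{⟨p,A⟩} · b^A` (again the sum of a summable family), then
`ev(h) = ev(f) * ev(g)`. This is the statement that evaluation at a point of `Y_P` is a
ring homomorphism from the affinoid ring `O_P` to `Λ`. -/
theorem evaluation_is_multiplicative (k : Type*) [Field k] (n : ℕ)
    (S : Set (Fin n → ℝ)) (f g : (Fin n → ℤ) → HahnSeries ℝ k)
    (hf : ConvergesOn k n f S) (hg : ConvergesOn k n g S)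
    (p : Fin n → ℝ) (hp : p ∈ S)
    (b : Fin n → (HahnSeries ℝ k)ˣ)
    (hb : ∀ i, ((b i : (HahnSeries ℝ k)ˣ) : HahnSeries ℝ k).order = 0) :
    ∀ sConv : (Fin n → ℤ) → HahnSeries.SummableFamily ℝ k (Fin n → ℤ),
      (∀ A B, sConv A B = f B * g (A - B)) →
      ∀ sf sg sh : HahnSeries.SummableFamily ℝ k (Fin n → ℤ),
        (∀ A, sf A = f A * HahnSeries.single (pairing n p A) 1 *
          ∏ i, ((b i ^ (A i) : (HahnSeries ℝ k)ˣ) : HahnSeries ℝ k)) →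
        (∀ A, sg A = g A * HahnSeries.single (pairing n p A) 1 *
          ∏ i, ((b i ^ (A i) : (HahnSeries ℝ k)ˣ) : HahnSeries ℝ k)) →
        (∀ A, sh A = (sConv A).hsum * HahnSeries.single (pairing n p A) 1 *
          ∏ i, ((b i ^ (A i) : (HahnSeries ℝ k)ˣ) : HahnSeries ℝ k)) →
        sh.hsum = sf.hsum * sg.hsum := by

  intro sConv hConv sf sg sh hsf hsg hsh
  classical
  -- the "monomial" factor
  set m : (Fin n → ℤ) → HahnSeries ℝ k := fun A =>
    HahnSeries.single (pairing n p A) 1 *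
      ∏ i, ((b i ^ (A i) : (HahnSeries ℝ k)ˣ) : HahnSeries ℝ k) with hm
  have hpair : ∀ A B : Fin n → ℤ, pairing n p (A + B) = pairing n p A + pairing n p B := by
    intro A B
    simp only [pairing, Pi.add_apply, Int.cast_add, mul_add, Finset.sum_add_distrib]
  have hmmul : ∀ A B : Fin n → ℤ, m A * m B = m (A + B) := by
    intro A B
    have hu : ∀ i, ((b i ^ ((A + B) i) : (HahnSeries ℝ k)ˣ) : HahnSeries ℝ k) =
        ((b i ^ (A i) : (HahnSeries ℝ k)ˣ) : HahnSeries ℝ k) *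
        ((b i ^ (B i) : (HahnSeries ℝ k)ˣ) : HahnSeries ℝ k) := by
      intro i
      rw [Pi.add_apply, zpow_add, Units.val_mul]
    calc m A * m B
        = (HahnSeries.single (pairing n p A) 1 * HahnSeries.single (pairing n p B) 1) *
            ((∏ i, ((b i ^ (A i) : (HahnSeries ℝ k)ˣ) : HahnSeries ℝ k)) *
             (∏ i, ((b i ^ (B i) : (HahnSeries ℝ k)ˣ) : HahnSeries ℝ k))) := by
          simp only [hm]; ring
      _ = m (A + B) := by
          rw [HahnSeries.single_mul_single, ← Finset.prod_mul_distrib]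
          simp only [hm, hpair, one_mul]
          congr 1
          exact (Finset.prod_congr rfl fun i _ => (hu i).symm)
  -- each sh A is the hsum of the rescaled family
  have hsh' : ∀ A, sh A = (m A • sConv A).hsum := by
    intro A
    simp only [hsh A, HahnSeries.SummableFamily.hsum_smul, hm]
    ring
  -- the product family
  let u : HahnSeries.SummableFamily ℝ k ((Fin n → ℤ) × (Fin n → ℤ)) :=
    HahnSeries.SummableFamily.mul sf sg
  have hu : ∀ q, u q = sf q.1 * sg q.2 := by
    intro q
    simp only [u, HahnSeries.SummableFamily.mul_toFun,
      HahnSeries.of_symm_smul_of_eq_mul]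
  have hprod : sf.hsum * sg.hsum = u.hsum := by
    rw [HahnSeries.SummableFamily.hsum_mul]
  rw [hprod]
  ext x
  rw [HahnSeries.SummableFamily.coeff_hsum, HahnSeries.SummableFamily.coeff_hsum]
  -- the coefficient function on the product
  set F : (Fin n → ℤ) × (Fin n → ℤ) → k := fun q => (sf q.1 * sg q.2).coeff x with hF
  have hFfin : (Function.support F).Finite := by
    refine (u.finite_co_support x).subset ?_
    intro q hq
    simp only [Function.mem_support, hF] at hq
    simpa only [Set.mem_setOf_eq, Function.mem_support, hu q] using hq
  -- inner sums
  have hinner : ∀ A, (sh A).coeff x = ∑ᶠ B, F (B, A - B) := by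
    intro A
    rw [hsh' A, HahnSeries.SummableFamily.coeff_hsum]
    refine finsum_congr fun B => ?_
    have h1 : (m A • sConv A) B = m A * sConv A B := by
      rw [HahnSeries.SummableFamily.smul_apply, HahnSeries.of_symm_smul_of_eq_mul]
    have hsfB : sf B = f B * m B := by simp only [hsf, hm]; ring
    have hsgB : sg (A - B) = g (A - B) * m (A - B) := by simp only [hsg, hm]; ring
    have hBA : B + (A - B) = A := by abel
    have h2 : sf B * sg (A - B) = m A * (f B * g (A - B)) := by
      calc sf B * sg (A - B)
          = m B * m (A - B) * (f B * g (A - B)) := by rw [hsfB, hsgB]; ring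
        _ = m A * (f B * g (A - B)) := by rw [hmmul, hBA]
    rw [h1, hConv A B]
    simp only [hF]
    rw [h2]
  simp_rw [hinner]
  -- now rearrange the double finsum
  let e : ((Fin n → ℤ) × (Fin n → ℤ)) ≃ ((Fin n → ℤ) × (Fin n → ℤ)) :=
    { toFun := fun q => (q.2, q.1 - q.2)
      invFun := fun q => (q.1 + q.2, q.1)
      left_inv := fun q => by simp
      right_inv := fun q => by simp }
  have hG : (Function.support (F ∘ e)).Finite :=
    hFfin.preimage (e.injective.injOn)
  have h3 : ∑ᶠ q : (Fin n → ℤ) × (Fin n → ℤ), F (e q) = ∑ᶠ q, F q :=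
    finsum_comp_equiv e
  calc ∑ᶠ A, ∑ᶠ B, F (B, A - B)
      = ∑ᶠ A, ∑ᶠ B, (F ∘ e) (A, B) := rfl
    _ = ∑ᶠ q : (Fin n → ℤ) × (Fin n → ℤ), F (e q) := (finsum_curry _ hG).symm
    _ = ∑ᶠ q, F q := h3
end
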